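/- Let α ∈ (0,1) and (c_x)_{x≥1} satisfy 0 < c_x < 1/2 and 0 < liminf_{x→∞} c_x x^{α} ≤ limsup_{x→∞} c_x x^{α} < ∞. Let {X_n} be the birth and death chain on ℤ₊ with p(0,1) = 1, p(x,x+1) = p_x = 1/2 − c_x, p(x,x−1) = q_x = 1/2 + c_x for x ≥ 1, with invariant probability measure π(x) = Z^{−1} ∏_{k=1}^{x} p_{k−1}/q_k, and let P be the transition operator on L²(π). Let V ∈ L²(π) with ∑_x V(x)π(x) = 0. Then ||V||²_{−1} := sup_{φ ∈ L²(π)} { 2⟨V,φ⟩_π − ⟨(I−P)φ,φ⟩_π } < ∞ if and only if ∑_{x=0}^{∞} π(x)^{−1} ( ∑_{y=0}^{x} V(y)π(y) )² < ∞. -/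

import Mathlib

open Filter

lemma summable_of_le_shift (f g : ℕ → ℝ) (C : ℝ) (M : ℕ) (hf : ∀ x, 0 ≤ f x)
    (hle : ∀ x ≥ M, f x ≤ C * g x) (hg : Summable g) : Summable f := by
  rw [← summable_nat_add_iff M]
  exact Summable.of_nonneg_of_le (fun n => hf _) (fun n => hle (n+M) (Nat.le_add_left M n))
    (((summable_nat_add_iff M).2 hg).mul_left C)



/-- finite Abel summation -/
lemma abel_fin (f φ : ℕ → ℝ) (Sf : ℕ → ℝ) (hS : ∀ x, Sf x = ∑ y ∈ Finset.range (x+1), f y) :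
    ∀ N, ∑ x ∈ Finset.range (N+1), f x * φ x
      = -(∑ x ∈ Finset.range (N+1), Sf x * (φ (x+1) - φ x)) + Sf N * φ (N+1) := by
  intro N
  induction N with
  | zero => simp [hS 0]; ring
  | succ n ih =>
      have h1 : Sf (n+1) = Sf n + f (n+1) := by
        rw [hS, hS, Finset.sum_range_succ]
      rw [Finset.sum_range_succ, ih,
        Finset.sum_range_succ (fun x => Sf x * (φ (x+1) - φ x)) (n+1), h1]
      ring

/-- limit Abel summation -/
lemma abel_tsum (f φ : ℕ → ℝ) (Sf : ℕ → ℝ) (hS : ∀ x, Sf x = ∑ y ∈ Finset.range (x+1), f y)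
    (h1 : Summable (fun x => f x * φ x))
    (h2 : Summable (fun x => Sf x * (φ (x+1) - φ x)))
    (h3 : Tendsto (fun N => Sf N * φ (N+1)) atTop (nhds 0)) :
    ∑' x, f x * φ x = -∑' x, Sf x * (φ (x+1) - φ x) := by
  have t1 : Tendsto (fun N => ∑ x ∈ Finset.range (N+1), f x * φ x) atTop
      (nhds (∑' x, f x * φ x)) :=
    (h1.hasSum.tendsto_sum_nat).comp (tendsto_add_atTop_nat 1)
  have t2 : Tendsto (fun N => -(∑ x ∈ Finset.range (N+1), Sf x * (φ (x+1) - φ x)) + Sf N * φ (N+1))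
      atTop (nhds (-∑' x, Sf x * (φ (x+1) - φ x) + 0)) :=
    Tendsto.add (Tendsto.neg ((h2.hasSum.tendsto_sum_nat).comp (tendsto_add_atTop_nat 1))) h3
  rw [add_zero] at t2
  exact tendsto_nhds_unique t1 (by simpa only [← abel_fin f φ Sf hS] using t2)



lemma tsum_shift' (w : ℕ → ℝ) (hw : Summable w) :
    ∑' x, (if x = 0 then (0:ℝ) else w (x-1)) = ∑' x, w x := by
  have hg : Summable (fun x => if x = 0 then (0:ℝ) else w (x-1)) := by
    rw [← summable_nat_add_iff 1]; simpa using hw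
  rw [Summable.tsum_eq_zero_add hg]; simp

lemma dirichlet (p q π : ℕ → ℝ) (pm : ℕ → ℕ → ℝ)
    (hpm : ∀ x y, pm x y = if y = x + 1 then p x else if y + 1 = x then q x else 0)
    (hπpos : ∀ x, 0 < π x)
    (hp0 : p 0 = 1) (hppos : ∀ x, 0 < p x) (hple : ∀ x, p x ≤ 1)
    (hqle : ∀ x ≥ 1, q x ≤ 1)
    (hpq1 : ∀ x ≥ 1, p x + q x = 1)
    (hdb : ∀ x, π x * p x = π (x+1) * q (x+1))
    (φ : ℕ → ℝ) (hφ : Summable (fun x => φ x ^ 2 * π x)) :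
    (∑' x, (φ x - ∑' y, pm x y * φ y) * φ x * π x
      = ∑' x, (π x * p x) * (φ (x+1) - φ x)^2)
    ∧ Summable (fun x => (π x * p x) * (φ (x+1) - φ x)^2) := by
  have hφ' : Summable (fun x => φ (x+1) ^ 2 * π (x+1)) :=
    (summable_nat_add_iff (f := fun x => φ x ^ 2 * π x) 1).2 hφ
  have hA1 : Summable (fun x => (π x * p x) * φ x ^ 2) := by
    apply Summable.of_nonneg_of_le
      (fun x => mul_nonneg (mul_pos (hπpos x) (hppos x)).le (sq_nonneg _)) (fun x => ?_) hφ
    nlinarith [mul_nonneg (mul_nonneg (hπpos x).le (sq_nonneg (φ x))) (sub_nonneg.2 (hple x))]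
  have hA2 : Summable (fun x => (π x * p x) * φ (x+1) ^ 2) := by
    apply Summable.of_nonneg_of_le
      (fun x => mul_nonneg (mul_pos (hπpos x) (hppos x)).le (sq_nonneg _)) (fun x => ?_) hφ'
    rw [hdb x]
    nlinarith [mul_nonneg (mul_nonneg (hπpos (x+1)).le (sq_nonneg (φ (x+1))))
      (sub_nonneg.2 (hqle (x+1) (Nat.le_add_left 1 x)))]
  have hcross : Summable (fun x => (π x * p x) * (φ x * φ (x+1))) := by
    apply Summable.of_abs
    apply Summable.of_nonneg_of_le (fun x => abs_nonneg _)
      (fun x => ?_) ((hA1.add hA2).mul_left (1/2 : ℝ))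
    have h0 : (0:ℝ) ≤ π x * p x := le_of_lt (mul_pos (hπpos x) (hppos x))
    rw [abs_mul, abs_of_nonneg h0]
    have : |φ x * φ (x+1)| ≤ (φ x ^2 + φ (x+1)^2) / 2 := by
      rw [abs_mul]
      nlinarith [sq_nonneg (|φ x| - |φ (x+1)|), sq_abs (φ x), sq_abs (φ (x+1)),
        abs_nonneg (φ x), abs_nonneg (φ (x+1))]
    nlinarith [h0]
  -- inner tsum
  have hinner : ∀ x, (∑' y, pm x y * φ y)
      = p x * φ (x+1) + (if x = 0 then 0 else q x * φ (x-1)) := by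
    intro x
    rcases x with _ | n
    · rw [tsum_eq_single 1 ?_]
      · simp [hpm, hp0]
      · intro y hy
        have h2 : ¬ (y + 1 = 0) := by omega
        simp [hpm, hy, h2]
    · rw [tsum_eq_sum (s := ({n+2, n} : Finset ℕ)) ?_]
      · rw [Finset.sum_pair (by omega : (n+2:ℕ) ≠ n)]
        have h1 : pm (n+1) (n+2) = p (n+1) := by simp [hpm]
        have h2 : pm (n+1) n = q (n+1) := by
          rw [hpm, if_neg (by omega), if_pos rfl]
        rw [h1, h2]
        simp
      · intro y hy
        simp only [Finset.mem_insert, Finset.mem_singleton] at hy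
        push_neg at hy
        have h1 : ¬(y = n+1+1) := by omega
        have h2 : ¬(y+1 = n+1) := by omega
        simp [hpm, h1, h2, hy.2]
  -- pointwise decomposition
  set u : ℕ → ℝ := fun x => (π x * p x) * (φ x^2 - φ x * φ (x+1)) with hu
  set w : ℕ → ℝ := fun x => (π x * p x) * (φ (x+1)^2 - φ (x+1) * φ x) with hw
  have husum : Summable u := by
    have := hA1.sub hcross
    simpa [hu, mul_sub] using this
  have hwsum : Summable w := by
    have := hA2.sub (hcross.congr (fun x => by ring) : Summable (fun x => (π x * p x) * (φ (x+1) * φ x)))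
    simpa [hw, mul_sub] using this
  have hpt : ∀ x, (φ x - ∑' y, pm x y * φ y) * φ x * π x
      = u x + (if x = 0 then 0 else w (x-1)) := by
    intro x
    rw [hinner x]
    rcases x with _ | n
    · simp only [hu, hp0, reduceIte]
      ring
    · simp only [hu, hw, Nat.add_sub_cancel, Nat.succ_ne_zero, reduceIte]
      have hd : π n * p n = π (n+1) * q (n+1) := hdb n
      have hs : p (n+1) + q (n+1) = 1 := hpq1 (n+1) (Nat.le_add_left 1 n)
      linear_combination (φ (n+1) * φ n - φ (n+1)^2) * hd - π (n+1) * φ (n+1)^2 * hs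
  have hgsum : Summable (fun x => if x = 0 then (0:ℝ) else w (x-1)) := by
    rw [← summable_nat_add_iff 1]; simpa using hwsum
  have hDsum : Summable (fun x => (π x * p x) * (φ (x+1) - φ x)^2) := by
    have := husum.add hwsum
    apply this.congr
    intro x
    simp only [hu, hw]
    ring
  constructor
  · calc ∑' x, (φ x - ∑' y, pm x y * φ y) * φ x * π x
        = ∑' x, (u x + (if x = 0 then 0 else w (x-1))) := tsum_congr hpt
      _ = ∑' x, u x + ∑' x, (if x = 0 then (0:ℝ) else w (x-1)) := Summable.tsum_add husum hgsum
      _ = ∑' x, u x + ∑' x, w x := by rw [tsum_shift' w hwsum]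
      _ = ∑' x, (u x + w x) := (Summable.tsum_add husum hwsum).symm
      _ = ∑' x, (π x * p x) * (φ (x+1) - φ x)^2 := by
          apply tsum_congr; intro x; simp only [hu, hw]; ring
  · exact hDsum

set_option maxHeartbeats 1000000 in
/-- For the birth and death chain with `p(0,1) = 1`, `p(x,x+1) = 1/2 - cₓ`,
`p(x,x-1) = 1/2 + cₓ`, `α ∈ (0,1)`, `0 < liminf cₓ xᵅ ≤ limsup cₓ xᵅ < ∞`, invariant
probability measure `π(x) = Z⁻¹ ∏_{k=1}^x p_{k-1}/q_k`, transition operator `P`, and a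
mean-zero `V ∈ L²(π)`, the Kipnis–Varadhan norm
`‖V‖²₋₁ = sup_{φ ∈ L²(π)} {2⟨V,φ⟩_π - ⟨(I-P)φ,φ⟩_π}` is finite (i.e. the set of its values is
bounded above) if and only if `∑ₓ π(x)⁻¹ (∑_{y=0}^x V(y)π(y))² < ∞`. -/
theorem stmt18 (α : ℝ) (hα0 : 0 < α) (hα1 : α < 1) (c : ℕ → ℝ)
    (hc : ∀ x ≥ 1, 0 < c x ∧ c x < 1 / 2)
    (hliminf : ∃ c₀ > 0, ∀ᶠ x : ℕ in atTop, c₀ ≤ c x * (x : ℝ) ^ α)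
    (hlimsup : ∃ C : ℝ, ∀ᶠ x : ℕ in atTop, c x * (x : ℝ) ^ α ≤ C)
    (p q : ℕ → ℝ) (hp0 : p 0 = 1)
    (hp : ∀ x ≥ 1, p x = 1 / 2 - c x)
    (hq : ∀ x ≥ 1, q x = 1 / 2 + c x)
    (pm : ℕ → ℕ → ℝ)
    (hpm : ∀ x y, pm x y = if y = x + 1 then p x else if y + 1 = x then q x else 0)
    (πt : ℕ → ℝ)
    (hπt : ∀ x, πt x = ∏ k ∈ Finset.Icc 1 x, p (k - 1) / q k)
    (π : ℕ → ℝ) (hπ : ∀ x, π x = πt x / ∑' y, πt y)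
    (V : ℕ → ℝ) (hV : Summable fun x => V x ^ 2 * π x)
    (hVmean : ∑' x, V x * π x = 0) :
    BddAbove {r : ℝ | ∃ φ : ℕ → ℝ, (Summable fun x => φ x ^ 2 * π x) ∧
        r = 2 * (∑' x, V x * φ x * π x) -
          ∑' x, (φ x - ∑' y, pm x y * φ y) * φ x * π x} ↔
      Summable fun x : ℕ => (π x)⁻¹ * (∑ y ∈ Finset.range (x + 1), V y * π y) ^ 2 := by
  have hppos : ∀ x, 0 < p x := by
    intro x
    rcases Nat.eq_zero_or_pos x with h | h
    · rw [h, hp0]; norm_num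
    · rw [hp x h]; have := (hc x h).2; linarith
  have hple : ∀ x, p x ≤ 1 := by
    intro x
    rcases Nat.eq_zero_or_pos x with h | h
    · rw [h, hp0]
    · rw [hp x h]; have := (hc x h).1; linarith
  have hqpos : ∀ x ≥ 1, 0 < q x := by
    intro x h; rw [hq x h]; have := (hc x h).1; linarith
  have hqle : ∀ x ≥ 1, q x ≤ 1 := by
    intro x h; rw [hq x h]; have := (hc x h).2; linarith
  have hpq1 : ∀ x ≥ 1, p x + q x = 1 := by
    intro x h; rw [hp x h, hq x h]; ring
  have hπtpos : ∀ x, 0 < πt x := by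
    intro x
    rw [hπt]
    apply Finset.prod_pos
    intro k hk
    have hk1 : 1 ≤ k := (Finset.mem_Icc.1 hk).1
    exact div_pos (hppos _) (hqpos k hk1)
  have hratio : ∀ x, πt (x+1) = πt x * (p x / q (x+1)) := by
    intro x
    rw [hπt, hπt, Finset.prod_Icc_succ_top (Nat.le_add_left 1 x)]
    simp
  -- c tends to zero
  have hc0 : Tendsto c atTop (nhds 0) := by
    obtain ⟨C, hC⟩ := hlimsup
    have hub : ∀ᶠ x : ℕ in atTop, c x ≤ C * ((x:ℝ) ^ α)⁻¹ := by
      filter_upwards [hC, eventually_ge_atTop 1] with x hx hx1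
      have hxpos : (0:ℝ) < (x:ℝ) ^ α := Real.rpow_pos_of_pos (by exact_mod_cast hx1) α
      have h2 : c x ≤ C / (x:ℝ)^α := (le_div_iff₀ hxpos).2 hx
      simpa [div_eq_mul_inv] using h2
    have hlb : ∀ᶠ x : ℕ in atTop, 0 ≤ c x := by
      filter_upwards [eventually_ge_atTop 1] with x hx using (hc x hx).1.le
    have htend : Tendsto (fun x : ℕ => C * ((x:ℝ) ^ α)⁻¹) atTop (nhds 0) := by
      rw [show (0:ℝ) = C * 0 by ring]
      apply Tendsto.const_mul
      apply Tendsto.inv_tendsto_atTop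
      exact Tendsto.comp (tendsto_rpow_atTop hα0) tendsto_natCast_atTop_atTop
    exact squeeze_zero' hlb hub htend
  -- summability of πt
  have hπtsum : Summable πt := by
    obtain ⟨c₀, hc₀pos, hlb⟩ := hliminf
    have hx1a : Tendsto (fun x : ℕ => (x:ℝ)^(1-α)) atTop atTop :=
      (tendsto_rpow_atTop (by linarith)).comp tendsto_natCast_atTop_atTop
    have hev3 : ∀ᶠ x : ℕ in atTop, 3 ≤ 2 * c₀ * (x:ℝ)^(1-α) := by
      have := hx1a.eventually_ge_atTop (3 / (2 * c₀))
      filter_upwards [this] with x hx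
      rw [div_le_iff₀ (by linarith : (0:ℝ) < 2 * c₀)] at hx
      linarith [hx]
    have hkey : ∀ᶠ x : ℕ in atTop, πt (x+1) * ((x:ℝ)+1)^2 ≤ πt x * (x:ℝ)^2 := by
      filter_upwards [hlb, hev3, eventually_ge_atTop 1] with x hcx h3 hx1
      have hx1R : (1:ℝ) ≤ (x:ℝ) := by exact_mod_cast hx1
      have hxpos : (0:ℝ) < (x:ℝ) := by linarith
      have hxa : (0:ℝ) < (x:ℝ)^α := Real.rpow_pos_of_pos hxpos α
      have hsplit : (x:ℝ)^(1-α) = (x:ℝ) / (x:ℝ)^α := by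
        rw [Real.rpow_sub hxpos, Real.rpow_one]
      have h2cx : 3 ≤ 2 * c x * (x:ℝ) := by
        rw [hsplit] at h3
        have : 2 * c₀ * ((x:ℝ) / (x:ℝ)^α) ≤ 2 * c x * (x:ℝ) := by
          rw [div_eq_mul_inv]
          have h4 : c₀ * (x:ℝ) ≤ c x * (x:ℝ)^α * (x:ℝ) :=
            mul_le_mul_of_nonneg_right hcx (by linarith)
          calc 2 * c₀ * ((x:ℝ) * ((x:ℝ)^α)⁻¹) = 2 * (c₀ * (x:ℝ)) * ((x:ℝ)^α)⁻¹ := by ring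
            _ ≤ 2 * (c x * (x:ℝ)^α * (x:ℝ)) * ((x:ℝ)^α)⁻¹ := by
                apply mul_le_mul_of_nonneg_right _ (inv_nonneg.2 hxa.le)
                linarith
            _ = 2 * c x * (x:ℝ) := by field_simp
        linarith
      have hcpos := (hc x hx1).1
      have hchalf := (hc x hx1).2
      have hq1 : q (x+1) = 1/2 + c (x+1) := hq (x+1) (Nat.le_add_left 1 x)
      have hcx1 : 0 < c (x+1) := (hc (x+1) (Nat.le_add_left 1 x)).1
      have hqlb : (1:ℝ)/2 ≤ q (x+1) := by rw [hq1]; linarith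
      have hqpos' : (0:ℝ) < q (x+1) := by linarith
      have hpx : p x = 1/2 - c x := hp x hx1
      have hπtx := hπtpos x
      rw [hratio x]
      have hdivle : p x / q (x+1) ≤ 1 - 2 * c x := by
        rw [div_le_iff₀ hqpos', hpx]
        nlinarith [hqlb, hcpos, hchalf]
      have hstep : (1 - 2 * c x) * ((x:ℝ)+1)^2 ≤ (x:ℝ)^2 := by
        nlinarith [h2cx, hx1R, hcpos.le, mul_nonneg hcpos.le (sq_nonneg ((x:ℝ)+1)),
          mul_le_mul_of_nonneg_left (sq_nonneg ((x:ℝ)+1)) hcpos.le]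
      calc πt x * (p x / q (x+1)) * ((x:ℝ)+1)^2
          ≤ πt x * (1 - 2 * c x) * ((x:ℝ)+1)^2 := by
            apply mul_le_mul_of_nonneg_right _ (sq_nonneg _)
            exact mul_le_mul_of_nonneg_left hdivle hπtx.le
        _ = πt x * ((1 - 2 * c x) * ((x:ℝ)+1)^2) := by ring
        _ ≤ πt x * (x:ℝ)^2 := mul_le_mul_of_nonneg_left hstep hπtx.le
    obtain ⟨M₀, hM⟩ := eventually_atTop.1 hkey
    set M := max M₀ 1 with hMdef
    have hM1 : 1 ≤ M := le_max_right _ _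
    have hmono : ∀ x ≥ M, πt x * (x:ℝ)^2 ≤ πt M * (M:ℝ)^2 := by
      intro x hx
      induction x, hx using Nat.le_induction with
      | base => exact le_refl _
      | succ n hn ih =>
          have : πt (n+1) * ((n:ℝ)+1)^2 ≤ πt n * (n:ℝ)^2 :=
            hM n (le_trans (le_max_left _ _) hn)
          have hcast : ((n+1 : ℕ):ℝ) = (n:ℝ)+1 := by push_cast; ring
          rw [hcast]
          linarith
    apply summable_of_le_shift πt (fun n => 1/(n:ℝ)^2) (πt M * (M:ℝ)^2) M
      (fun x => (hπtpos x).le) _ _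
    · intro x hx
      have hxR : (1:ℝ) ≤ (x:ℝ) := by
        have : 1 ≤ x := le_trans hM1 hx
        exact_mod_cast this
      have hx2 : (0:ℝ) < (x:ℝ)^2 := by positivity
      have := hmono x hx
      rw [mul_one_div, le_div_iff₀ hx2]
      linarith
    · exact Real.summable_one_div_nat_pow.2 one_lt_two
  -- facts about π
  have hπt0 : πt 0 = 1 := by rw [hπt]; simp
  have hTpos : 0 < ∑' y, πt y :=
    lt_of_lt_of_le one_pos (by rw [← hπt0]; exact Summable.le_tsum hπtsum 0 (fun b _ => (hπtpos b).le))
  have hπpos : ∀ x, 0 < π x := fun x => by rw [hπ]; exact div_pos (hπtpos x) hTpos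
  have hπsum : Summable π := (hπtsum.div_const _).congr (fun x => (hπ x).symm)
  have hdb : ∀ x, π x * p x = π (x+1) * q (x+1) := by
    intro x
    have hq0 : q (x+1) ≠ 0 := (hqpos (x+1) (Nat.le_add_left 1 x)).ne'
    rw [hπ, hπ, hratio x]
    field_simp
  have hplow : ∃ M, ∀ x ≥ M, (1:ℝ)/4 ≤ p x := by
    obtain ⟨M₁, h1⟩ := eventually_atTop.1 (hc0.eventually_lt_const (by norm_num : (0:ℝ) < 1/4))
    refine ⟨max M₁ 1, fun x hx => ?_⟩
    rw [hp x (le_trans (le_max_right _ _) hx)]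
    have := h1 x (le_trans (le_max_left _ _) hx)
    linarith
  have haplb : ∀ x, 0 < π x * p x := fun x => mul_pos (hπpos x) (hppos x)
  have hπub : ∀ x, π x * p x ≤ π x :=
    fun x => mul_le_of_le_one_right (hπpos x).le (hple x)
  have hπub2 : ∀ x, π x * p x ≤ π (x+1) := fun x => by
    rw [hdb x]; exact mul_le_of_le_one_right (hπpos (x+1)).le (hqle (x+1) (Nat.le_add_left 1 x))
  -- facts about V and S
  set S : ℕ → ℝ := fun x => ∑ y ∈ Finset.range (x+1), V y * π y with hSdef
  have hVπabs : Summable (fun x => |V x * π x|) := by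
    apply Summable.of_nonneg_of_le (fun x => abs_nonneg _) (fun x => ?_)
      ((hV.add hπsum).mul_left (1/2))
    have h0 := hπpos x
    rw [abs_mul, abs_of_nonneg h0.le]
    have h1 : |V x| ≤ (V x ^ 2 + 1) / 2 := by
      nlinarith [sq_abs (V x), sq_nonneg (|V x| - 1)]
    nlinarith [mul_le_mul_of_nonneg_right h1 h0.le]
  have hVπ : Summable (fun x => V x * π x) := Summable.of_abs hVπabs
  have hStend : Tendsto S atTop (nhds 0) := by
    rw [← hVmean]
    exact hVπ.hasSum.tendsto_sum_nat.comp (tendsto_add_atTop_nat 1)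
  -- the target summand equals S via hSdef
  have hgoal : (fun x : ℕ => (π x)⁻¹ * (∑ y ∈ Finset.range (x + 1), V y * π y) ^ 2)
      = fun x => (π x)⁻¹ * S x ^ 2 := rfl
  rw [hgoal]
  constructor
  · -- boundedness implies summability
    rintro ⟨B, hB⟩
    have hpartial : ∀ N, ∑ x ∈ Finset.range N, S x ^ 2 / (π x * p x) ≤ B := by
      intro N
      set K : ℝ := ∑ y ∈ Finset.range N, |S y / (π y * p y)| with hK
      set φ : ℕ → ℝ := fun x => -(∑ y ∈ Finset.range (min x N), S y / (π y * p y)) with hφ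
      have hφbd : ∀ x, |φ x| ≤ K := by
        intro x
        rw [hφ]
        simp only [abs_neg]
        calc |∑ y ∈ Finset.range (min x N), S y / (π y * p y)|
            ≤ ∑ y ∈ Finset.range (min x N), |S y / (π y * p y)| :=
              Finset.abs_sum_le_sum_abs _ _
          _ ≤ K := Finset.sum_le_sum_of_subset_of_nonneg
              (Finset.range_subset_range.2 (min_le_right _ _)) (fun i _ _ => abs_nonneg _)
      have hφsum : Summable (fun x => φ x ^ 2 * π x) := by
        apply Summable.of_nonneg_of_le (fun x => mul_nonneg (sq_nonneg _) (hπpos x).le)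
          (fun x => ?_) (hπsum.mul_left (K^2))
        have h1 : φ x ^ 2 ≤ K ^ 2 := by
          rw [← sq_abs (φ x)]
          apply pow_le_pow_left₀ (abs_nonneg _) (hφbd x)
        nlinarith [hπpos x]
      have hgval : ∀ x, φ (x+1) - φ x = if x < N then -(S x / (π x * p x)) else 0 := by
        intro x
        rcases lt_or_ge x N with h | h
        · rw [if_pos h, hφ]
          simp only
          rw [min_eq_left (by omega : x + 1 ≤ N), min_eq_left (by omega : x ≤ N),
            Finset.sum_range_succ]
          ring
        · rw [if_neg (not_lt.2 h), hφ]
          simp only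
          rw [min_eq_right (by omega : N ≤ x + 1), min_eq_right h]
          ring
      obtain ⟨hEid, hDsum⟩ := dirichlet p q π pm hpm hπpos hp0 hppos hple hqle hpq1 hdb φ hφsum
      have hEcalc : ∑' x, (π x * p x) * (φ (x+1) - φ x)^2
          = ∑ x ∈ Finset.range N, S x ^ 2 / (π x * p x) := by
        rw [tsum_eq_sum (s := Finset.range N) ?_]
        · apply Finset.sum_congr rfl
          intro x hx
          rw [hgval x, if_pos (Finset.mem_range.1 hx)]
          have := (haplb x).ne'
          field_simp
        · intro x hx
          rw [hgval x, if_neg (by simpa using hx)]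
          ring
      have hVφsum : Summable (fun x => (V x * π x) * φ x) := by
        apply Summable.of_abs
        apply Summable.of_nonneg_of_le (fun x => abs_nonneg _) (fun x => ?_)
          (hVπabs.mul_left K)
        rw [abs_mul]
        have h1 : 0 ≤ |V x * π x| := abs_nonneg _
        nlinarith [hφbd x, abs_nonneg (φ x)]
      have hSgsum : Summable (fun x => S x * (φ (x+1) - φ x)) := by
        rw [← summable_nat_add_iff N]
        apply summable_zero.congr
        intro n
        rw [hgval (n + N), if_neg (by omega)]
        ring
      have hbdry : Tendsto (fun n => S n * φ (n+1)) atTop (nhds 0) := by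
        refine squeeze_zero_norm (a := fun n => |S n| * K) (fun n => ?_) ?_
        · 
          rw [Real.norm_eq_abs, abs_mul]
          exact mul_le_mul_of_nonneg_left (hφbd (n+1)) (abs_nonneg _)
        · have : Tendsto (fun n => |S n|) atTop (nhds 0) := by
            simpa using hStend.abs
          simpa using this.mul_const K
      have hVcalc : ∑' x, V x * φ x * π x = ∑ x ∈ Finset.range N, S x ^ 2 / (π x * p x) := by
        have h1 : ∑' x, V x * φ x * π x = ∑' x, (V x * π x) * φ x :=
          tsum_congr (fun x => by ring)
        rw [h1, abel_tsum (fun x => V x * π x) φ S (fun x => rfl) hVφsum hSgsum hbdry]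
        rw [tsum_eq_sum (s := Finset.range N) ?_]
        · rw [← Finset.sum_neg_distrib]
          apply Finset.sum_congr rfl
          intro x hx
          rw [hgval x, if_pos (Finset.mem_range.1 hx)]
          have := (haplb x).ne'
          field_simp
        · intro x hx
          rw [hgval x, if_neg (by simpa using hx)]
          ring
      have hr : (2 * (∑' x, V x * φ x * π x) -
          ∑' x, (φ x - ∑' y, pm x y * φ y) * φ x * π x)
          = ∑ x ∈ Finset.range N, S x ^ 2 / (π x * p x) := by
        rw [hEid, hEcalc, hVcalc]
        ring
      have hmem : (∑ x ∈ Finset.range N, S x ^ 2 / (π x * p x)) ∈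
          {r : ℝ | ∃ φ : ℕ → ℝ, (Summable fun x => φ x ^ 2 * π x) ∧
            r = 2 * (∑' x, V x * φ x * π x) -
              ∑' x, (φ x - ∑' y, pm x y * φ y) * φ x * π x} :=
        ⟨φ, hφsum, hr.symm⟩
      exact hB hmem
    have hDsum2 : Summable (fun x => S x ^ 2 / (π x * p x)) :=
      summable_of_sum_range_le (fun n => div_nonneg (sq_nonneg _) (haplb n).le) hpartial
    apply Summable.of_nonneg_of_le (fun x => mul_nonneg (inv_nonneg.2 (hπpos x).le) (sq_nonneg _))
      (fun x => ?_) hDsum2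
    rw [inv_mul_eq_div]
    exact div_le_div_of_nonneg_left (sq_nonneg _) (haplb x) (hπub x)
  · -- summability implies boundedness
    intro hsum
    obtain ⟨M, hM⟩ := hplow
    have hDsum2 : Summable (fun x => S x ^ 2 / (π x * p x)) := by
      apply summable_of_le_shift _ (fun x => (π x)⁻¹ * S x ^ 2) 4 M
        (fun x => div_nonneg (sq_nonneg _) (haplb x).le) (fun x hx => ?_) hsum
      have hpq := hM x hx
      have h1 : π x / 4 ≤ π x * p x := by nlinarith [hπpos x]
      calc S x ^ 2 / (π x * p x) ≤ S x ^ 2 / (π x / 4) :=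
            div_le_div_of_nonneg_left (sq_nonneg _) (by linarith [hπpos x] : (0:ℝ) < π x / 4) h1
        _ = 4 * ((π x)⁻¹ * S x ^ 2) := by
            rw [div_div_eq_mul_div]
            field_simp
    refine ⟨∑' x, S x ^ 2 / (π x * p x), ?_⟩
    rintro r ⟨φ, hφsum, rfl⟩
    obtain ⟨hEid, hDsum⟩ := dirichlet p q π pm hpm hπpos hp0 hppos hple hqle hpq1 hdb φ hφsum
    set g : ℕ → ℝ := fun x => φ (x+1) - φ x with hg
    have hφ' : Summable (fun x => φ (x+1) ^ 2 * π (x+1)) :=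
      (summable_nat_add_iff (f := fun x => φ x ^ 2 * π x) 1).2 hφsum
    have hVφsum : Summable (fun x => (V x * π x) * φ x) := by
      apply Summable.of_abs
      apply Summable.of_nonneg_of_le (fun x => abs_nonneg _) (fun x => ?_)
        ((hV.add hφsum).mul_left (1/2))
      have h0 := (hπpos x).le
      rw [abs_mul, abs_mul, abs_of_nonneg h0]
      have h1 : |V x| * |φ x| ≤ (V x ^ 2 + φ x ^ 2) / 2 := by
        nlinarith [sq_nonneg (|V x| - |φ x|), sq_abs (V x), sq_abs (φ x)]
      nlinarith [mul_le_mul_of_nonneg_right h1 h0, abs_nonneg (V x), abs_nonneg (φ x), hπpos x]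
    have hSgsum : Summable (fun x => S x * g x) := by
      apply Summable.of_abs
      apply Summable.of_nonneg_of_le (fun x => abs_nonneg _) (fun x => ?_)
        ((hDsum2.add hDsum).mul_left (1/2))
      have hA := haplb x
      have key : |S x * g x| * (2 * (π x * p x)) ≤ S x ^ 2 + (π x * p x)^2 * g x ^ 2 := by
        rw [abs_mul]
        nlinarith [sq_nonneg (|S x| - (π x * p x) * |g x|), sq_abs (S x), sq_abs (g x),
          abs_nonneg (S x), abs_nonneg (g x), hA]
      have hform : S x ^ 2 / (π x * p x) + (π x * p x) * g x ^ 2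
          = (S x ^ 2 + (π x * p x)^2 * g x ^ 2) / (π x * p x) := by
        field_simp
      have h2 : 1/2 * ((S x ^ 2 + (π x * p x)^2 * g x ^ 2) / (π x * p x))
          = (S x ^ 2 + (π x * p x)^2 * g x ^ 2) / (2 * (π x * p x)) := by ring
      rw [hform, h2, le_div_iff₀ (by linarith : (0:ℝ) < 2 * (π x * p x))]
      exact key
    have hbdry : Tendsto (fun n => S n * φ (n+1)) atTop (nhds 0) := by
      have hsq : Tendsto (fun n => (S n ^ 2 / (π n * p n)) * (π (n+1) * φ (n+1)^2))
          atTop (nhds 0) := by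
        have t1 : Tendsto (fun n => S n ^ 2 / (π n * p n)) atTop (nhds 0) :=
          hDsum2.tendsto_atTop_zero
        have t2 : Tendsto (fun n => π (n+1) * φ (n+1)^2) atTop (nhds 0) := by
          have := hφ'.tendsto_atTop_zero
          apply this.congr
          intro n
          ring
        simpa using t1.mul t2
      refine squeeze_zero_norm
        (a := fun n => Real.sqrt ((S n ^ 2 / (π n * p n)) * (π (n+1) * φ (n+1)^2)))
        (fun n => ?_) ?_
      · 
        rw [Real.norm_eq_abs, ← Real.sqrt_sq_eq_abs]
        apply Real.sqrt_le_sqrt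
        have hA := haplb n
        have h1 : (S n * φ (n+1))^2 = (S n ^ 2 / (π n * p n)) * ((π n * p n) * φ (n+1)^2) := by
          rw [div_mul_eq_mul_div, eq_div_iff hA.ne']
          ring
        rw [h1]
        apply mul_le_mul_of_nonneg_left _ (div_nonneg (sq_nonneg _) hA.le)
        exact mul_le_mul_of_nonneg_right (hπub2 n) (sq_nonneg _)
      · have := (Real.continuous_sqrt.tendsto 0).comp hsq
        simpa [Function.comp_def] using this
    have hVcalc : ∑' x, V x * φ x * π x = -∑' x, S x * g x := by
      have h1 : ∑' x, V x * φ x * π x = ∑' x, (V x * π x) * φ x :=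
        tsum_congr (fun x => by ring)
      rw [h1, abel_tsum (fun x => V x * π x) φ S (fun x => rfl) hVφsum hSgsum hbdry]
    rw [hEid, hVcalc]
    have hcombo : 2 * -∑' x, S x * g x - ∑' x, (π x * p x) * (φ (x+1) - φ x)^2
        = ∑' x, (-2 * (S x * g x) - (π x * p x) * g x ^ 2) := by
      rw [Summable.tsum_sub ((hSgsum.mul_left (-2))) (hDsum.congr (fun x => by rw [hg]))]
      rw [tsum_mul_left]
      have h2 : ∑' x, (π x * p x) * g x ^ 2 = ∑' x, (π x * p x) * (φ (x+1) - φ x)^2 :=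
        tsum_congr (fun x => by rw [hg])
      rw [h2]
      ring
    rw [hcombo]
    apply Summable.tsum_le_tsum _ ((hSgsum.mul_left (-2)).sub (hDsum.congr (fun x => by rw [hg]))) hDsum2
    intro x
    have hA := haplb x
    have expand : S x ^ 2 / (π x * p x) + 2 * (S x * g x) + (π x * p x) * g x ^ 2
        = (S x + (π x * p x) * g x)^2 / (π x * p x) := by
      rw [eq_div_iff hA.ne', add_mul, add_mul, div_mul_cancel₀ _ hA.ne']
      ring
    have hpos : 0 ≤ (S x + (π x * p x) * g x)^2 / (π x * p x) :=
      div_nonneg (sq_nonneg _) hA.le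
    linarith [expand ▸ hpos]
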